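/- Suppose each ∇f_j is Lipschitz continuous with constant L, d(x) is the unique global minimizer of d ↦ Q(x,d), and t(x) = Q(x,d(x)). Then for every α ∈ [0,1] and every j = 1,…,m, F_j(x + α d(x)) − F_j(x) ≤ α t(x) + (L/2) α² ‖d(x)‖². -/

import Mathlib

open Filter Topology Finset
open scoped RealInnerProductSpace

set_option maxHeartbeats 1000000

noncomputable section

/-- One-sided directional derivative: `c = F'(x; d) = lim_{α→0⁺} (F(x+αd) − F(x))/α`. -/
def HasDirDeriv {n : ℕ} (F : EuclideanSpace ℝ (Fin n) → ℝ)
    (x d : EuclideanSpace ℝ (Fin n)) (c : ℝ) : Prop :=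
  Filter.Tendsto (fun α : ℝ => (F (x + α • d) - F x) / α) (nhdsWithin 0 (Set.Ioi 0)) (nhds c)

/-- Subdifferential of a convex function: `∂h(x) = {ξ : h(y) ≥ h(x) + ⟪ξ, y − x⟫ ∀ y}`. -/
def subdiff {n : ℕ} (h : EuclideanSpace ℝ (Fin n) → ℝ) (x : EuclideanSpace ℝ (Fin n)) :
    Set (EuclideanSpace ℝ (Fin n)) :=
  {ξ | ∀ y, h x + ⟪ξ, y - x⟫ ≤ h y}

/-- `Q_j(x,d) = ∇f_j(x)ᵀd + ½ dᵀ∇²f_j(x)d + g_j(x+d) − g_j(x)`, where the Hessian is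
the Fréchet derivative of the gradient. -/
def Qj {n m : ℕ} (f g : Fin (m + 1) → EuclideanSpace ℝ (Fin n) → ℝ)
    (j : Fin (m + 1)) (x d : EuclideanSpace ℝ (Fin n)) : ℝ :=
  ⟪gradient (f j) x, d⟫ + (1 / 2) * ⟪(fderiv ℝ (gradient (f j)) x) d, d⟫
    + g j (x + d) - g j x

/-- `Q(x,d) = max_{1 ≤ j ≤ m} Q_j(x,d)`. -/
def Qmax {n m : ℕ} (f g : Fin (m + 1) → EuclideanSpace ℝ (Fin n) → ℝ)
    (x d : EuclideanSpace ℝ (Fin n)) : ℝ :=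
  Finset.univ.sup' Finset.univ_nonempty (fun j => Qj f g j x d)

/-- Descent lemma for L-Lipschitz gradient. -/
lemma descent_lemma {n : ℕ} (L : ℝ) (f : EuclideanSpace ℝ (Fin n) → ℝ)
    (hf : Differentiable ℝ f)
    (hLip : ∀ y z, ‖gradient f y - gradient f z‖ ≤ L * ‖y - z‖)
    (x d : EuclideanSpace ℝ (Fin n)) (α : ℝ) (hα : 0 ≤ α) :
    f (x + α • d) ≤ f x + α * ⟪gradient f x, d⟫ + L / 2 * α ^ 2 * ‖d‖ ^ 2 := by
  set c := ⟪gradient f x, d⟫ with hc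
  have key : ∀ s : ℝ, HasDerivAt (fun s : ℝ => f (x + s • d))
      ⟪gradient f (x + s • d), d⟫ s := by
    intro s
    have h1 : HasDerivAt (fun s : ℝ => x + s • d) d s := by
      simpa using ((hasDerivAt_id s).smul_const d).const_add x
    have h2 : HasFDerivAt f ((InnerProductSpace.toDual ℝ _)
        (gradient f (x + s • d))) (x + s • d) :=
      hasGradientAt_iff_hasFDerivAt.mp (hf _).hasGradientAt
    exact (h2.comp_hasDerivAt s h1).congr_deriv (by simp [InnerProductSpace.toDual_apply_apply])
  set φ : ℝ → ℝ := fun s => f (x + s • d) - (s * c + L / 2 * s ^ 2 * ‖d‖ ^ 2) with hφdef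
  have hφ : ∀ s : ℝ, HasDerivAt φ (⟪gradient f (x + s • d), d⟫ - (c + L * s * ‖d‖ ^ 2)) s := by
    intro s
    have h3 : HasDerivAt (fun s : ℝ => s * c + L / 2 * s ^ 2 * ‖d‖ ^ 2)
        (c + L * s * ‖d‖ ^ 2) s := by
      have := ((hasDerivAt_id s).mul_const c).add
        (((hasDerivAt_pow 2 s).const_mul (L / 2)).mul_const (‖d‖ ^ 2))
      exact this.congr_deriv (by ring)
    exact (key s).sub h3
  have hanti : AntitoneOn φ (Set.Icc 0 α) := by
    apply antitoneOn_of_deriv_nonpos (convex_Icc 0 α)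
    · have hline : Continuous fun s : ℝ => x + s • d :=
        continuous_const.add (continuous_id.smul continuous_const)
      have hpoly : Continuous fun s : ℝ => s * c + L / 2 * s ^ 2 * ‖d‖ ^ 2 := by fun_prop
      exact ((hf.continuous.comp hline).sub hpoly).continuousOn
    · exact fun s _ => (hφ s).differentiableAt.differentiableWithinAt
    · intro s hs
      rw [interior_Icc] at hs
      rw [(hφ s).deriv]
      have h4 : ⟪gradient f (x + s • d) - gradient f x, d⟫ ≤ L * s * ‖d‖ ^ 2 := by
        calc ⟪gradient f (x + s • d) - gradient f x, d⟫
            ≤ ‖gradient f (x + s • d) - gradient f x‖ * ‖d‖ := real_inner_le_norm _ _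
          _ ≤ (L * ‖(x + s • d) - x‖) * ‖d‖ := by
              gcongr; exact hLip _ _
          _ = L * (|s| * ‖d‖) * ‖d‖ := by rw [add_sub_cancel_left, norm_smul]; norm_num
          _ = L * s * ‖d‖ ^ 2 := by rw [abs_of_pos hs.1]; ring
      rw [inner_sub_left, ← hc] at h4
      linarith
  have h5 : φ α ≤ φ 0 := hanti ⟨le_rfl, hα⟩ ⟨hα, le_rfl⟩ hα
  have h6 : φ 0 = f x := by simp [hφdef]
  have h7 : φ α = f (x + α • d) - (α * c + L / 2 * α ^ 2 * ‖d‖ ^ 2) := rfl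
  rw [h6, h7] at h5
  linarith

/-- if each `∇f_j` is Lipschitz with constant `L` (and Hessians are positive
semidefinite), `d(x)` is the unique global minimizer of `d ↦ Q(x,d)` and `t(x) = Q(x,d(x))`,
then for every `α ∈ [0,1]` and every `j`,
`F_j(x + α d(x)) − F_j(x) ≤ α t(x) + (L/2) α² ‖d(x)‖²`, where `F_j = f_j + g_j`. -/
theorem descent_estimate_lipschitz {n m : ℕ} (L : ℝ) (hL : 0 < L)
    (f g : Fin (m + 1) → EuclideanSpace ℝ (Fin n) → ℝ)
    (hfconv : ∀ j, ConvexOn ℝ Set.univ (f j))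
    (hfC2 : ∀ j, ContDiff ℝ 2 (f j))
    (hfpsd : ∀ j (y d : EuclideanSpace ℝ (Fin n)),
      0 ≤ ⟪(fderiv ℝ (gradient (f j)) y) d, d⟫)
    (hLip : ∀ j (y z : EuclideanSpace ℝ (Fin n)),
      ‖gradient (f j) y - gradient (f j) z‖ ≤ L * ‖y - z‖)
    (hgconv : ∀ j, ConvexOn ℝ Set.univ (g j))
    (hgcont : ∀ j, Continuous (g j))
    (x dx : EuclideanSpace ℝ (Fin n)) (t : ℝ)
    (hmin : ∀ d, Qmax f g x dx ≤ Qmax f g x d)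
    (huniq : ∀ d, (∀ d', Qmax f g x d ≤ Qmax f g x d') → d = dx)
    (ht : t = Qmax f g x dx) :
    ∀ α : ℝ, 0 ≤ α → α ≤ 1 → ∀ j,
      (f j (x + α • dx) + g j (x + α • dx)) - (f j x + g j x)
        ≤ α * t + L / 2 * α ^ 2 * ‖dx‖ ^ 2 := by
  intro α hα0 hα1 j
  have hdiff : Differentiable ℝ (f j) := (hfC2 j).differentiable (by norm_num)
  have hdesc := descent_lemma L (f j) hdiff (hLip j) x dx α hα0
  -- convexity of g
  have hgid : (1 - α) • x + α • (x + dx) = x + α • dx := by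
    rw [smul_add, sub_smul, one_smul]; abel
  have hgc : g j (x + α • dx) ≤ (1 - α) * g j x + α * g j (x + dx) := by
    have := (hgconv j).2 (Set.mem_univ x) (Set.mem_univ (x + dx))
      (by linarith : (0:ℝ) ≤ 1 - α) hα0 (by ring)
    rwa [hgid] at this
  -- Qj ≤ t
  have hQle : Qj f g j x dx ≤ t := ht ▸ Finset.le_sup' (fun j => Qj f g j x dx) (mem_univ j)
  have hpsd := hfpsd j x dx
  have hQj : ⟪gradient (f j) x, dx⟫ + g j (x + dx) - g j x ≤ Qj f g j x dx := by
    rw [Qj]; linarith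
  have key : ⟪gradient (f j) x, dx⟫ + g j (x + dx) - g j x ≤ t := le_trans hQj hQle
  nlinarith [mul_le_mul_of_nonneg_left key hα0]
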